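/- Let 0 < c < 1/8 be a constant and let ε > 0 be a constant. There exists k₀ such that for all integers k ≥ k₀ the following holds whenever 2^k(1−α)^{2k} > (1+ε)/ε, where α = c·log₂(k)/k and αn is a positive integer: for m = (ln(2)·2^k − γ)·n with γ ∈ [0, ln(2)·2^k/4], if φ is drawn from D_R(m,n,k) and c_s = ⌈n^2·2^n / C(n, αn)⌉ assignments are drawn independently and uniformly at random from {0,1}^n, then with probability at least 1 − 2·2^{−n/(8(1+ε)^2·k^{8c})}, the number of sampled assignments v with NumClausesSAT(φ, v) ≥ (1 − (1−(1−α)^{2k})/(2^k−1))·m is at most 4n^3·2^n/(C(n, αn)·k^{αn}). -/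

import Mathlib

open scoped Classical
open Finset

/-- An assignment of `n` Boolean variables. -/
abbrev Assignment (n : ℕ) := Fin n → Bool

/-- A clause: an ordered `k`-tuple of literals, each a variable index together with a sign. -/
abbrev Clause (n k : ℕ) := Fin k → Fin n × Bool

/-- A formula: an ordered `m`-tuple of clauses. -/
abbrev Formula (n k m : ℕ) := Fin m → Clause n k

/-- An assignment satisfies a clause if it satisfies at least one literal of the clause. -/
def SatClause {n k : ℕ} (v : Assignment n) (c : Clause n k) : Prop :=
  ∃ i, v (c i).1 = (c i).2

/-- An assignment satisfies a formula if it satisfies every clause. -/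
def SatFormula {n k m : ℕ} (v : Assignment n) (φ : Formula n k m) : Prop :=
  ∀ j, SatClause v (φ j)

/-- The number of clauses of `φ` satisfied by `v`. -/
noncomputable def numSat {n k m : ℕ} (φ : Formula n k m) (v : Assignment n) : ℕ :=
  (Finset.univ.filter fun j => SatClause v (φ j)).card

/-- The number of clauses of `φ` left unsatisfied by `v`. -/
noncomputable def numUnsat {n k m : ℕ} (φ : Formula n k m) (v : Assignment n) : ℕ :=
  (Finset.univ.filter fun j => ¬ SatClause v (φ j)).card

/-! ### Auxiliary lemmas -/

lemma aux_unsat_clause_card (n k : ℕ) (v : Assignment n) :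
    ((univ : Finset (Clause n k)).filter fun cl => ¬ SatClause v cl).card = n ^ k := by
  have h1 : ((univ : Finset (Fin n × Bool)).filter fun p => ¬ (v p.1 = p.2)).card = n := by
    have : ((univ : Finset (Fin n × Bool)).filter fun p => ¬ (v p.1 = p.2))
        = (univ : Finset (Fin n)).image (fun x => (x, !v x)) := by
      ext ⟨x, b⟩
      simp only [mem_filter, mem_univ, true_and, mem_image, Prod.mk.injEq]
      constructor
      · intro h; exact ⟨x, rfl, by cases hb : b <;> cases hv : v x <;> simp_all⟩
      · rintro ⟨y, rfl, rfl⟩; simp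
    rw [this, Finset.card_image_of_injective _ (fun a b h => (Prod.mk.injEq _ _ _ _).mp h |>.1),
      Finset.card_univ, Fintype.card_fin]
  have h2 : ((univ : Finset (Clause n k)).filter fun cl => ¬ SatClause v cl)
      = Fintype.piFinset (fun _ : Fin k => (univ : Finset (Fin n × Bool)).filter
          fun p => ¬ (v p.1 = p.2)) := by
    ext cl
    simp only [mem_filter, mem_univ, true_and, Fintype.mem_piFinset, SatClause, not_exists]
  rw [h2, Fintype.card_piFinset]
  simp [h1]

lemma aux_sum_pow_unsat (n k m : ℕ) (v : Assignment n) (l : ℝ) :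
    ∑ φ : Formula n k m, l ^ numUnsat φ v
      = ((2 * (n : ℝ)) ^ k - (1 - l) * (n : ℝ) ^ k) ^ m := by
  have hterm : ∀ φ : Formula n k m, l ^ numUnsat φ v
      = ∏ j : Fin m, (if SatClause v (φ j) then (1:ℝ) else l) := by
    intro φ
    rw [Finset.prod_ite, Finset.prod_const, Finset.prod_const, one_pow, one_mul, numUnsat]
  simp_rw [hterm]
  have := Finset.prod_univ_sum (fun _ : Fin m => (univ : Finset (Clause n k)))
    (fun _ cl => if SatClause v cl then (1:ℝ) else l)
  rw [Fintype.piFinset_univ] at this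
  rw [← this, Finset.prod_const]
  congr 1
  · rw [Finset.sum_ite, Finset.sum_const, Finset.sum_const, nsmul_eq_mul, nsmul_eq_mul,
      mul_one, aux_unsat_clause_card]
    have hc : ((univ : Finset (Clause n k)).filter fun cl => SatClause v cl).card
        = (2*n) ^ k - n ^ k := by
      have htot := Finset.card_filter_add_card_filter_not (s := (univ : Finset (Clause n k)))
        (p := fun cl => SatClause v cl)
      rw [aux_unsat_clause_card, Finset.card_univ] at htot
      have hcard : Fintype.card (Clause n k) = (2*n) ^ k := by
        rw [Fintype.card_fun]
        simp [Fintype.card_prod, mul_comm]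
      omega
    rw [hc]
    have hle : n ^ k ≤ (2*n) ^ k := Nat.pow_le_pow_left (by omega) k
    push_cast [hle]
    ring
  · simp

lemma aux_coord_filter {ι A : Type*} [Fintype ι] [DecidableEq ι] [Fintype A]
    (i : ι) (P : A → Prop) :
    ((univ : Finset (ι → A)).filter fun w => P (w i)).card
      = (univ.filter P).card * (Fintype.card A) ^ (Fintype.card ι - 1) := by
  classical
  set s : ι → Finset A := fun j => if j = i then univ.filter P else univ with hs
  have h1 : ((univ : Finset (ι → A)).filter fun w => P (w i)) = Fintype.piFinset s := by
    ext w
    simp only [mem_filter, mem_univ, true_and, Fintype.mem_piFinset, hs]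
    constructor
    · intro h j
      by_cases hj : j = i
      · subst hj; simp [h]
      · simp [hj]
    · intro h
      have := h i
      simpa using this
  rw [h1, Fintype.card_piFinset]
  rw [← Finset.mul_prod_erase univ (fun j => (s j).card) (Finset.mem_univ i)]
  have h2 : ∀ j ∈ univ.erase i, (s j).card = Fintype.card A := by
    intro j hj
    rcases Finset.mem_erase.mp hj with ⟨hne, _⟩
    simp [hs, hne, Finset.card_univ]
  rw [Finset.prod_congr rfl h2, Finset.prod_const, Finset.card_erase_of_mem (mem_univ i),
    Finset.card_univ]
  simp [hs]

lemma aux_markov (n k m cs : ℕ) (P : Formula n k m → Assignment n → Prop) (B K : ℝ)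
    (hK : ∀ v : Assignment n,
      (((univ : Finset (Formula n k m)).filter fun φ => P φ v).card : ℝ) ≤ K) :
    B * (((univ : Finset (Formula n k m × (Fin cs → Assignment n))).filter fun p =>
        ¬ ((((univ : Finset (Fin cs)).filter fun i => P p.1 (p.2 i)).card : ℝ) ≤ B)).card : ℝ)
      ≤ (cs : ℝ) * ((2:ℝ)^n * K) * ((2:ℝ)^n) ^ (cs - 1) := by
  have hA : Fintype.card (Assignment n) = 2 ^ n := by
    simp [Fintype.card_fun]
  have step1 : ∀ (i : Fin cs) (φ : Formula n k m),
      ((univ : Finset (Fin cs → Assignment n)).filter fun w => P φ (w i)).card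
        = ((univ.filter fun v => P φ v).card) * (2 ^ n) ^ (cs - 1) := by
    intro i φ
    exact (aux_coord_filter i (P φ)).trans (by rw [hA, Fintype.card_fin])
  have step2 : ∑ p : Formula n k m × (Fin cs → Assignment n),
      (((univ : Finset (Fin cs)).filter fun i => P p.1 (p.2 i)).card)
      = ∑ i : Fin cs, ∑ φ : Formula n k m,
          ((univ.filter fun v => P φ v).card) * (2 ^ n) ^ (cs - 1) := by
    rw [Fintype.sum_prod_type]
    have e1 : ∀ φ : Formula n k m, ∑ w : Fin cs → Assignment n,
        (((univ : Finset (Fin cs)).filter fun i => P φ (w i)).card)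
        = ∑ i : Fin cs, ((univ.filter fun v => P φ v).card) * (2 ^ n) ^ (cs - 1) := by
      intro φ
      simp_rw [Finset.card_filter]
      rw [Finset.sum_comm]
      refine Finset.sum_congr rfl fun i _ => ?_
      rw [← Finset.card_filter, step1 i φ, Finset.card_filter]
    simp_rw [e1]
    exact Finset.sum_comm
  have step3 : ∑ φ : Formula n k m, (((univ : Finset (Assignment n)).filter
        fun v => P φ v).card : ℝ)
      = ∑ v : Assignment n, (((univ : Finset (Formula n k m)).filter
        fun φ => P φ v).card : ℝ) := by
    simp_rw [Finset.card_filter]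
    push_cast
    exact Finset.sum_comm
  have hsum : (∑ p : Formula n k m × (Fin cs → Assignment n),
      ((((univ : Finset (Fin cs)).filter fun i => P p.1 (p.2 i)).card) : ℝ))
      ≤ (cs : ℝ) * ((2:ℝ)^n * K) * ((2:ℝ)^n) ^ (cs - 1) := by
    rw [← Nat.cast_sum, step2]
    push_cast
    calc (∑ i : Fin cs, ∑ φ : Formula n k m,
          (((univ.filter fun v => P φ v).card : ℝ)) * ((2:ℝ) ^ n) ^ (cs - 1))
        = ∑ i : Fin cs, (∑ φ : Formula n k m,
            (((univ.filter fun v => P φ v).card : ℝ))) * ((2:ℝ) ^ n) ^ (cs - 1) := by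
          simp_rw [Finset.sum_mul]
      _ ≤ ∑ i : Fin cs, ((2:ℝ)^n * K) * ((2:ℝ) ^ n) ^ (cs - 1) := by
          refine Finset.sum_le_sum fun i _ => ?_
          refine mul_le_mul_of_nonneg_right ?_ (by positivity)
          rw [step3]
          calc ∑ v : Assignment n, (((univ : Finset (Formula n k m)).filter
                fun φ => P φ v).card : ℝ)
              ≤ ∑ _v : Assignment n, K := Finset.sum_le_sum fun v _ => hK v
            _ = (2:ℝ)^n * K := by
                rw [Finset.sum_const, Finset.card_univ, hA, nsmul_eq_mul]; push_cast; ring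
      _ = (cs : ℝ) * ((2:ℝ)^n * K) * ((2:ℝ)^n) ^ (cs - 1) := by
          rw [Finset.sum_const, Finset.card_univ, Fintype.card_fin, nsmul_eq_mul]; ring
  set Bad := (univ : Finset (Formula n k m × (Fin cs → Assignment n))).filter fun p =>
      ¬ ((((univ : Finset (Fin cs)).filter fun i => P p.1 (p.2 i)).card : ℝ) ≤ B) with hBad
  have hmark : B * (Bad.card : ℝ) ≤ ∑ p ∈ Bad,
      ((((univ : Finset (Fin cs)).filter fun i => P p.1 (p.2 i)).card) : ℝ) := by
    rw [mul_comm]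
    have := Finset.card_nsmul_le_sum Bad
      (fun p => ((((univ : Finset (Fin cs)).filter fun i => P p.1 (p.2 i)).card) : ℝ)) B
      (fun p hp => by
        rw [hBad, Finset.mem_filter] at hp
        exact (not_le.mp hp.2).le)
    rwa [nsmul_eq_mul] at this
  calc B * (Bad.card : ℝ) ≤ ∑ p ∈ Bad,
        ((((univ : Finset (Fin cs)).filter fun i => P p.1 (p.2 i)).card) : ℝ) := hmark
    _ ≤ ∑ p : Formula n k m × (Fin cs → Assignment n),
        ((((univ : Finset (Fin cs)).filter fun i => P p.1 (p.2 i)).card) : ℝ) := by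
        apply Finset.sum_le_sum_of_subset_of_nonneg (Finset.filter_subset _ _)
        intro p _ _; positivity
    _ ≤ _ := hsum

lemma aux_formula_count (n k m : ℕ) (v : Assignment n) (s l : ℝ)
    (hl0 : 0 < l) (hl1 : l ≤ 1) (_hs : 0 ≤ s) :
    (((univ : Finset (Formula n k m)).filter fun φ => (numUnsat φ v : ℝ) ≤ s).card : ℝ)
      ≤ l ^ (-s) * ((2 * (n : ℝ)) ^ k - (1 - l) * (n : ℝ) ^ k) ^ m := by
  rw [← aux_sum_pow_unsat n k m v l]
  have key : ∀ φ ∈ (univ : Finset (Formula n k m)).filter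
      (fun φ => (numUnsat φ v : ℝ) ≤ s), (1:ℝ) ≤ l ^ (-s) * l ^ numUnsat φ v := by
    intro φ hφ
    rw [Finset.mem_filter] at hφ
    have h1 : l ^ s ≤ l ^ ((numUnsat φ v : ℝ)) :=
      Real.rpow_le_rpow_of_exponent_ge hl0 hl1 hφ.2
    have h2 : l ^ ((numUnsat φ v : ℝ)) = l ^ numUnsat φ v := Real.rpow_natCast l _
    calc (1:ℝ) = l ^ (-s) * l ^ s := by
          rw [← Real.rpow_add hl0]; simp
      _ ≤ l ^ (-s) * l ^ numUnsat φ v := by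
          rw [← h2]
          exact mul_le_mul_of_nonneg_left h1 (Real.rpow_nonneg hl0.le _)
  calc (((univ : Finset (Formula n k m)).filter fun φ => (numUnsat φ v : ℝ) ≤ s).card : ℝ)
      = ∑ φ ∈ (univ : Finset (Formula n k m)).filter
          (fun φ => (numUnsat φ v : ℝ) ≤ s), (1:ℝ) := by simp
    _ ≤ ∑ φ ∈ (univ : Finset (Formula n k m)).filter
          (fun φ => (numUnsat φ v : ℝ) ≤ s), l ^ (-s) * l ^ numUnsat φ v :=
        Finset.sum_le_sum key
    _ ≤ ∑ φ : Formula n k m, l ^ (-s) * l ^ numUnsat φ v := by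
        apply Finset.sum_le_sum_of_subset_of_nonneg (Finset.filter_subset _ _)
        intro φ _ _
        positivity
    _ = l ^ (-s) * ∑ φ : Formula n k m, l ^ numUnsat φ v := by rw [Finset.mul_sum]

lemma aux_log_lb (u : ℝ) (_h0 : 0 < u) (h1 : u < 1) : -Real.log (1 - u) ≤ u / (1 - u) := by
  have hpos : 0 < 1 - u := by linarith
  have h := Real.log_le_sub_one_of_pos (x := (1 - u)⁻¹) (by positivity)
  rw [Real.log_inv] at h
  have h2 : (1 - u)⁻¹ - 1 = u / (1 - u) := by field_simp; ring
  linarith [h2 ▸ h]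

lemma aux_exp_bound (δ μ : ℝ) (hδ0 : 0 < δ) (hδ1 : δ < 1) (hμ : 0 ≤ μ) :
    -((1 - δ) * μ) * Real.log (1 - δ / 2) + (-(δ / 2) * μ) ≤ -(μ * δ ^ 2 / 4) := by
  have hu0 : 0 < δ / 2 := by linarith
  have hu1 : δ / 2 < 1 := by linarith
  have hpos : 0 < 1 - δ / 2 := by linarith
  have hL := aux_log_lb (δ / 2) hu0 hu1
  have hcoef : 0 ≤ (1 - δ) * μ := by apply mul_nonneg <;> linarith
  have h1 : -((1 - δ) * μ) * Real.log (1 - δ / 2)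
      ≤ (1 - δ) * μ * ((δ / 2) / (1 - δ / 2)) := by
    calc -((1 - δ) * μ) * Real.log (1 - δ / 2)
        = (1 - δ) * μ * (-Real.log (1 - δ / 2)) := by ring
      _ ≤ (1 - δ) * μ * ((δ / 2) / (1 - δ / 2)) := mul_le_mul_of_nonneg_left hL hcoef
  have e : (1 - δ) * μ * ((δ / 2) / (1 - δ / 2)) - δ / 2 * μ + μ * δ ^ 2 / 4
      = -(μ * δ ^ 3 / 8) / (1 - δ / 2) := by
    have h2δ : (2:ℝ) - δ ≠ 0 := by linarith
    field_simp [h2δ]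
    ring
  have h3 : -(μ * δ ^ 3 / 8) / (1 - δ / 2) ≤ 0 := by
    apply div_nonpos_of_nonpos_of_nonneg _ hpos.le
    have : 0 ≤ μ * δ ^ 3 / 8 := by positivity
    linarith
  linarith

lemma aux_count_exp (n k m : ℕ) (hn : 0 < n) (v : Assignment n) (δ : ℝ)
    (hδ0 : 0 < δ) (hδ1 : δ < 1) :
    (((univ : Finset (Formula n k m)).filter fun φ =>
        (numUnsat φ v : ℝ) ≤ (1 - δ) * ((m : ℝ) / 2 ^ k)).card : ℝ)
      ≤ ((2 * (n:ℝ)) ^ k) ^ m * Real.exp (-(((m:ℝ)/2^k) * δ ^ 2 / 4)) := by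
  set μ : ℝ := (m : ℝ) / 2 ^ k with hμdef
  have hμ : 0 ≤ μ := by positivity
  have hl0 : 0 < 1 - δ / 2 := by linarith
  have hl1 : 1 - δ / 2 ≤ 1 := by linarith
  have hs : 0 ≤ (1 - δ) * μ := mul_nonneg (by linarith) hμ
  have h1 := aux_formula_count n k m v ((1 - δ) * μ) (1 - δ / 2) hl0 hl1 hs
  refine h1.trans ?_
  have hn' : (0:ℝ) < (n : ℝ) := by exact_mod_cast hn
  have h2k : (0:ℝ) < (2:ℝ) ^ k := by positivity
  have hbase : (2 * (n : ℝ)) ^ k - (1 - (1 - δ / 2)) * (n : ℝ) ^ k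
      = (2 * (n : ℝ)) ^ k * (1 - (δ / 2) / 2 ^ k) := by
    have : (2 * (n : ℝ)) ^ k = 2 ^ k * (n:ℝ) ^ k := mul_pow 2 _ k
    rw [this]
    field_simp
    ring
  rw [hbase, mul_pow]
  have hbnn : (0:ℝ) ≤ 1 - (δ / 2) / 2 ^ k := by
    have h1k : (1:ℝ) ≤ (2:ℝ)^k := one_le_pow₀ (by norm_num)
    have : (δ / 2) / 2 ^ k ≤ δ / 2 := by
      apply div_le_self (by linarith) h1k
    linarith
  have hexp1 : (1 - (δ / 2) / 2 ^ k) ^ m ≤ Real.exp (-(δ/2) * μ) := by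
    calc (1 - (δ / 2) / 2 ^ k) ^ m ≤ (Real.exp (-((δ / 2) / 2 ^ k))) ^ m := by
          apply pow_le_pow_left₀ hbnn
          linarith [Real.add_one_le_exp (-((δ / 2) / 2 ^ k))]
      _ = Real.exp ((m:ℝ) * -((δ / 2) / 2 ^ k)) := (Real.exp_nat_mul _ m).symm
      _ = Real.exp (-(δ/2) * μ) := by rw [hμdef]; ring_nf
  have hrpow : (1 - δ / 2) ^ (-((1 - δ) * μ))
      = Real.exp (-((1 - δ) * μ) * Real.log (1 - δ/2)) := by
    rw [Real.rpow_def_of_pos hl0]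
    ring_nf
  calc (1 - δ / 2) ^ (-((1 - δ) * μ)) * (((2 * (n:ℝ)) ^ k) ^ m * (1 - (δ / 2) / 2 ^ k) ^ m)
      ≤ (1 - δ / 2) ^ (-((1 - δ) * μ)) * (((2 * (n:ℝ)) ^ k) ^ m * Real.exp (-(δ/2) * μ)) := by
        apply mul_le_mul_of_nonneg_left _ (by positivity)
        apply mul_le_mul_of_nonneg_left hexp1 (by positivity)
    _ = ((2 * (n:ℝ)) ^ k) ^ m *
        (Real.exp (-((1 - δ) * μ) * Real.log (1 - δ/2)) * Real.exp (-(δ/2) * μ)) := by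
        rw [hrpow]; ring
    _ ≤ ((2 * (n:ℝ)) ^ k) ^ m * Real.exp (-(μ * δ ^ 2 / 4)) := by
        apply mul_le_mul_of_nonneg_left _ (by positivity)
        rw [← Real.exp_add]
        exact Real.exp_le_exp.mpr (aux_exp_bound δ μ hδ0 hδ1 hμ)

open Filter in
lemma aux_k0 (c ε : ℝ) (hc0 : 0 < c) (hc : c < 1/8) (hε : 0 < ε) :
    ∃ k₀ : ℕ, 2 ≤ k₀ ∧ ∀ k : ℕ, k₀ ≤ k →
      16*c*(1+ε)^2*(Real.log k)^2 * (k:ℝ)^(8*c) ≤ (Real.log 2)^2 * k := by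
  have hr : 0 < (1 - 8*c)/2 := by linarith
  have h1 : Tendsto (fun x : ℝ => Real.log x / x ^ ((1 - 8*c)/2)) atTop (nhds 0) :=
    (isLittleO_log_rpow_atTop hr).tendsto_div_nhds_zero
  have h2 : Tendsto (fun x : ℝ => (Real.log x / x ^ ((1 - 8*c)/2))^2) atTop (nhds 0) := by
    have := h1.pow 2
    simpa using this
  have hC0 : 0 < (Real.log 2)^2 / (16*c*(1+ε)^2) := by
    have h2pos : 0 < Real.log 2 := Real.log_pos (by norm_num)
    positivity
  have hev : ∀ᶠ x : ℝ in atTop,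
      (Real.log x / x ^ ((1 - 8*c)/2))^2 < (Real.log 2)^2 / (16*c*(1+ε)^2) :=
    h2.eventually (eventually_lt_nhds hC0)
  obtain ⟨R, hR⟩ := (hev.and (eventually_ge_atTop (2:ℝ))).exists_forall_of_atTop
  refine ⟨max 2 ⌈R⌉₊, le_max_left _ _, fun k hk => ?_⟩
  have hkR : R ≤ (k:ℝ) := by
    have h1 : ⌈R⌉₊ ≤ k := le_trans (le_max_right _ _) hk
    calc R ≤ (⌈R⌉₊ : ℝ) := Nat.le_ceil R
      _ ≤ (k : ℝ) := by exact_mod_cast h1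
  obtain ⟨hlt, hx2⟩ := hR (k:ℝ) hkR
  set x : ℝ := (k:ℝ) with hxdef
  have hx0 : 0 < x := by linarith
  have hsq : (Real.log x / x ^ ((1 - 8*c)/2))^2 = (Real.log x)^2 / x ^ (1 - 8*c) := by
    rw [div_pow, ← Real.rpow_natCast (x ^ ((1-8*c)/2)) 2, ← Real.rpow_mul hx0.le]
    norm_num
  rw [hsq] at hlt
  have hd0 : (0:ℝ) < x ^ (1 - 8*c) := Real.rpow_pos_of_pos hx0 _
  have hKc0 : (0:ℝ) < x ^ (8*c) := Real.rpow_pos_of_pos hx0 _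
  have hxx : x ^ (1 - 8*c) * x ^ (8*c) = x := by
    rw [← Real.rpow_add hx0]
    norm_num
  have hlog2 : (Real.log x)^2 < (Real.log 2)^2 / (16*c*(1+ε)^2) * x ^ (1 - 8*c) := by
    rw [div_lt_iff₀ hd0] at hlt
    linarith
  have hP2 : (0:ℝ) < 16*c*(1+ε)^2 := by positivity
  calc 16*c*(1+ε)^2*(Real.log x)^2 * x^(8*c)
      ≤ 16*c*(1+ε)^2*((Real.log 2)^2 / (16*c*(1+ε)^2) * x ^ (1 - 8*c)) * x^(8*c) := by
        apply mul_le_mul_of_nonneg_right _ hKc0.le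
        apply mul_le_mul_of_nonneg_left hlog2.le hP2.le
    _ = (Real.log 2)^2 * (x ^ (1 - 8*c) * x ^ (8*c)) := by
        field_simp
    _ = (Real.log 2)^2 * x := by rw [hxx]

lemma aux_choose_le_two_pow (n t : ℕ) : n.choose t ≤ 2 ^ n := by
  rcases le_or_gt t n with h | h
  · calc n.choose t ≤ ∑ i ∈ Finset.range (n+1), n.choose i :=
        Finset.single_le_sum (f := fun i => n.choose i) (fun i _ => Nat.zero_le _)
          (Finset.mem_range.mpr (by omega))
      _ = 2 ^ n := Nat.sum_range_choose n
  · rw [Nat.choose_eq_zero_of_lt h]; exact Nat.zero_le _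

set_option maxHeartbeats 1000000 in
theorem set_size_bound_our_alpha (c ε : ℝ) (hc0 : 0 < c) (hc : c < 1 / 8) (hε : 0 < ε) :
    ∃ k₀ : ℕ, ∀ k : ℕ, k₀ ≤ k →
      ∀ α : ℝ, α = c * Real.logb 2 k / k →
        2 ^ k * (1 - α) ^ (2 * k) > (1 + ε) / ε →
          ∀ n : ℕ, 0 < n → ∀ t : ℕ, 0 < t → (t : ℝ) = α * n →
            ∀ γ : ℝ, 0 ≤ γ → γ ≤ Real.log 2 * 2 ^ k / 4 →
              ∀ m : ℕ, (m : ℝ) = (Real.log 2 * 2 ^ k - γ) * n →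
    let T : ℝ := (1 - (1 - (1 - α) ^ (2 * k)) / (2 ^ k - 1)) * m
    let cs : ℕ := ⌈((n : ℝ) ^ 2 * 2 ^ n) / (n.choose t : ℝ)⌉₊
    (((univ : Finset (Formula n k m × (Fin cs → Assignment n))).filter fun p =>
        (((univ : Finset (Fin cs)).filter fun i =>
            T ≤ (numSat p.1 (p.2 i) : ℝ)).card : ℝ)
          ≤ 4 * (n : ℝ) ^ 3 * 2 ^ n / ((n.choose t : ℝ) * (k : ℝ) ^ t)).card : ℝ)
      / (Fintype.card (Formula n k m × (Fin cs → Assignment n)) : ℝ)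
      ≥ 1 - 2 * (2 : ℝ) ^ (-(n : ℝ) / (8 * (1 + ε) ^ 2 * (k : ℝ) ^ (8 * c))) := by
  obtain ⟨k₀, hk₀2, hk₀⟩ := aux_k0 c ε hc0 hc hε
  refine ⟨k₀, fun k hk α hα hgt n hn t ht htα γ hγ0 hγ m hm => ?_⟩
  intro T cs
  -- basic positivity facts
  have hk2 : 2 ≤ k := le_trans hk₀2 hk
  have hkR : (2:ℝ) ≤ (k:ℝ) := by exact_mod_cast hk2
  have hk0R : (0:ℝ) < (k:ℝ) := by linarith
  have hLk : 0 < Real.log k := Real.log_pos (by linarith)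
  have hL2 : 0 < Real.log 2 := Real.log_pos (by norm_num)
  have hnR : (0:ℝ) < (n:ℝ) := by exact_mod_cast hn
  have hn1 : (1:ℝ) ≤ (n:ℝ) := by exact_mod_cast hn
  have hlogb : Real.logb 2 (k:ℝ) = Real.log k / Real.log 2 := by rw [Real.logb]
  have hα0 : 0 < α := by
    rw [hα, hlogb]
    positivity
  have hα18 : α ≤ 1/8 := by
    have hlbk : Real.logb 2 (k:ℝ) ≤ (k:ℝ) := by
      have h1 : (k:ℝ) ≤ (2:ℝ)^k := by
        exact_mod_cast (Nat.lt_two_pow_self (n := k)).le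
      have h2 : Real.log k ≤ (k:ℝ) * Real.log 2 := by
        rw [← Real.log_pow]
        exact Real.log_le_log hk0R h1
      rw [hlogb, div_le_iff₀ hL2]
      linarith
    rw [hα]
    have h1 : c * Real.logb 2 (k:ℝ) ≤ c * k :=
      mul_le_mul_of_nonneg_left hlbk hc0.le
    rw [div_le_iff₀ hk0R]
    nlinarith
  have h1α : 0 < 1 - α := by linarith
  have h2kR : (1:ℝ) < (2:ℝ)^k := one_lt_pow₀ (by norm_num) (by omega)
  set β : ℝ := (1 - α) ^ (2*k) with hβdef
  have hβ0 : 0 < β := pow_pos h1α _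
  have hβ1 : β < 1 := pow_lt_one₀ h1α.le (by linarith) (by omega)
  have hgt' : (1+ε) < ε * ((2:ℝ)^k * β) := by
    rw [gt_iff_lt, div_lt_iff₀ hε] at hgt
    linarith [hgt]
  set δ : ℝ := ((2:ℝ)^k * β - 1)/((2:ℝ)^k - 1) with hδdef
  have hden : (0:ℝ) < (2:ℝ)^k - 1 := by linarith
  have h2kβ : (1:ℝ) < (2:ℝ)^k * β := by nlinarith
  have hδ0 : 0 < δ := div_pos (by linarith) hden
  have hδ1 : δ < 1 := by
    rw [hδdef, div_lt_one hden]
    have : (2:ℝ)^k * β < 2^k * 1 := mul_lt_mul_of_pos_left hβ1 (by linarith)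
    linarith
  have hδβ : β / (1+ε) ≤ δ := by
    rw [hδdef, div_le_div_iff₀ (by linarith) hden]
    have key : 1 + ε ≤ β + ε * ((2:ℝ)^k * β) := by linarith [hgt', hβ0]
    ring_nf
    ring_nf at key
    linarith
  set μ : ℝ := (m:ℝ) / 2^k with hμdef
  have hμ32 : 3/4 * Real.log 2 * n ≤ μ := by
    rw [hμdef, hm]
    rw [le_div_iff₀ (by positivity)]
    have : γ * n ≤ Real.log 2 * 2^k / 4 * n :=
      mul_le_mul_of_nonneg_right hγ (by positivity)
    nlinarith [this]
  have hμ0 : 0 ≤ μ := le_trans (by positivity) hμ32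
  -- event translation
  have hTs : T = (m:ℝ) - (1 - δ) * μ := by
    show (1 - (1 - β) / (2 ^ k - 1)) * m = (m:ℝ) - (1 - δ) * μ
    rw [hδdef, hμdef]
    field_simp
    ring
  have hiff : ∀ (φ : Formula n k m) (v : Assignment n),
      (T ≤ (numSat φ v : ℝ)) ↔ ((numUnsat φ v : ℝ) ≤ (1 - δ) * μ) := by
    intro φ v
    have hsum : numSat φ v + numUnsat φ v = m := by
      rw [numSat, numUnsat, Finset.card_filter_add_card_filter_not,
        Finset.card_univ, Fintype.card_fin]
    have hsumR : (numSat φ v : ℝ) + (numUnsat φ v : ℝ) = m := by exact_mod_cast hsum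
    rw [hTs]
    constructor <;> intro h <;> linarith
  -- apply Markov
  set B : ℝ := 4 * (n : ℝ) ^ 3 * 2 ^ n / ((n.choose t : ℝ) * (k : ℝ) ^ t) with hBdef
  have htn : t ≤ n := by
    have : (t:ℝ) ≤ (n:ℝ) := by
      rw [htα]
      nlinarith
    exact_mod_cast this
  have hCpos : (0:ℝ) < (n.choose t : ℝ) := by
    exact_mod_cast Nat.choose_pos htn
  have hBpos : 0 < B := by
    rw [hBdef]
    positivity
  set K : ℝ := ((2 * (n:ℝ)) ^ k) ^ m * Real.exp (-(μ * δ ^ 2 / 4)) with hKdef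
  have hK : ∀ v : Assignment n,
      (((univ : Finset (Formula n k m)).filter fun φ =>
        (numUnsat φ v : ℝ) ≤ (1 - δ) * μ).card : ℝ) ≤ K := by
    intro v
    exact aux_count_exp n k m hn v δ hδ0 hδ1
  have hmarkov := aux_markov n k m cs
    (fun φ v => (numUnsat φ v : ℝ) ≤ (1 - δ) * μ) B K hK
  -- rewrite goal predicate
  have hgoalpred : ((univ : Finset (Formula n k m × (Fin cs → Assignment n))).filter fun p =>
        (((univ : Finset (Fin cs)).filter fun i =>
            T ≤ (numSat p.1 (p.2 i) : ℝ)).card : ℝ) ≤ B)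
      = ((univ : Finset (Formula n k m × (Fin cs → Assignment n))).filter fun p =>
        (((univ : Finset (Fin cs)).filter fun i =>
            (numUnsat p.1 (p.2 i) : ℝ) ≤ (1 - δ) * μ).card : ℝ) ≤ B) := by
    apply Finset.filter_congr
    intro p _
    have : ((univ : Finset (Fin cs)).filter fun i => T ≤ (numSat p.1 (p.2 i) : ℝ))
        = ((univ : Finset (Fin cs)).filter fun i =>
            (numUnsat p.1 (p.2 i) : ℝ) ≤ (1 - δ) * μ) := by
      apply Finset.filter_congr
      intro i _
      simp [hiff p.1 (p.2 i)]
    rw [this]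
  -- cardinalities
  have hNform : (Fintype.card (Formula n k m) : ℝ) = ((2 * (n:ℝ)) ^ k) ^ m := by
    rw [Fintype.card_fun]
    have : Fintype.card (Clause n k) = (2*n)^k := by
      rw [Fintype.card_fun]
      simp [Fintype.card_prod, mul_comm]
    rw [this, Fintype.card_fin]
    push_cast
    ring
  have hNassign : (Fintype.card (Fin cs → Assignment n) : ℝ) = ((2:ℝ)^n) ^ cs := by
    rw [Fintype.card_fun]
    have : Fintype.card (Assignment n) = 2^n := by simp [Fintype.card_fun]
    rw [this, Fintype.card_fin]
    push_cast
    ring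
  have hNtot : (Fintype.card (Formula n k m × (Fin cs → Assignment n)) : ℝ)
      = ((2 * (n:ℝ)) ^ k) ^ m * ((2:ℝ)^n) ^ cs := by
    rw [Fintype.card_prod]
    push_cast
    rw [hNform, hNassign]
  have hNtotpos : (0:ℝ) < (Fintype.card (Formula n k m × (Fin cs → Assignment n)) : ℝ) := by
    rw [hNtot]
    positivity
  -- the key analytic inequality
  set r : ℝ := (2 : ℝ) ^ (-(n : ℝ) / (8 * (1 + ε) ^ 2 * (k : ℝ) ^ (8 * c))) with hrdef
  have hr0 : 0 < r := Real.rpow_pos_of_pos (by norm_num) _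
  have hcs1 : 1 ≤ cs := by
    rw [Nat.one_le_ceil_iff]
    positivity
  set Kc : ℝ := (k:ℝ) ^ (8*c) with hKcdef
  have hKc0 : 0 < Kc := Real.rpow_pos_of_pos hk0R _
  set P2 : ℝ := (1+ε)^2 with hP2def
  have hP20 : (0:ℝ) < P2 := by rw [hP2def]; positivity
  have hkα : α * (k:ℝ) = c * Real.log k / Real.log 2 := by
    rw [hα, hlogb]
    field_simp
  have hlt2 : (0.6931471803 : ℝ) < Real.log 2 := Real.log_two_gt_d9
  -- β² ≥ Kc⁻¹
  have hβ2 : Kc⁻¹ ≤ β ^ 2 := by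
    have hβsq : β ^ 2 = Real.exp (((2*k*2 : ℕ) : ℝ) * Real.log (1-α)) := by
      rw [hβdef, ← pow_mul, ← Real.log_pow, Real.exp_log (pow_pos h1α _)]
    have hKcinv : Kc⁻¹ = Real.exp (-(8*c) * Real.log k) := by
      rw [hKcdef, Real.rpow_def_of_pos hk0R, ← Real.exp_neg]
      ring_nf
    rw [hβsq, hKcinv, Real.exp_le_exp]
    have hlog1α : -Real.log (1-α) ≤ α / (1-α) := aux_log_lb α hα0 (by linarith only [hα18])
    have hfrac : α / (1-α) ≤ (8/7) * α := by
      rw [div_le_iff₀ h1α]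
      nlinarith only [hα0, hα18]
    have hstep : (32/7) * (c * Real.log k / Real.log 2) * Real.log 2 ≤ 8 * c * Real.log k
        * Real.log 2 := by
      have h87 : (32/7 : ℝ) ≤ 8 * Real.log 2 := by linarith only [hlt2]
      have hcLk : 0 < c * Real.log k := mul_pos hc0 hLk
      have : (32/7) * (c * Real.log k) ≤ (8 * Real.log 2) * (c * Real.log k) :=
        mul_le_mul_of_nonneg_right h87 hcLk.le
      calc (32/7) * (c * Real.log k / Real.log 2) * Real.log 2
          = (32/7) * (c * Real.log k) := by
            field_simp
        _ ≤ (8 * Real.log 2) * (c * Real.log k) := this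
        _ = 8 * c * Real.log k * Real.log 2 := by ring
    have hstep' : (32/7) * (c * Real.log k / Real.log 2) ≤ 8 * c * Real.log k :=
      le_of_mul_le_mul_right (by linarith only [hstep]) hL2
    have hcast : ((2*k*2 : ℕ) : ℝ) = 4 * (k:ℝ) := by push_cast; ring
    rw [hcast]
    have h4k0 : (0:ℝ) ≤ 4 * (k:ℝ) := by linarith only [hkR]
    have h4k : -(4 * (k:ℝ) * Real.log (1-α)) ≤ (32/7) * (α * (k:ℝ)) := by
      calc -(4 * (k:ℝ) * Real.log (1-α)) = 4*(k:ℝ) * (-Real.log (1-α)) := by ring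
        _ ≤ 4*(k:ℝ) * (α / (1-α)) := mul_le_mul_of_nonneg_left hlog1α h4k0
        _ ≤ 4*(k:ℝ) * ((8/7) * α) := mul_le_mul_of_nonneg_left hfrac h4k0
        _ = (32/7) * (α * (k:ℝ)) := by ring
    rw [hkα] at h4k
    linarith only [h4k, hstep']
  -- exp(-μδ²/4) * k^t ≤ r
  have hEk : Real.exp (-(μ * δ ^ 2 / 4)) * (k:ℝ) ^ t ≤ r := by
    have hkpow : ((k:ℝ)) ^ t = Real.exp ((t:ℝ) * Real.log k) := by
      rw [← Real.log_pow, Real.exp_log (pow_pos hk0R t)]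
    have hrexp : r = Real.exp (Real.log 2 * (-(n:ℝ) / (8 * P2 * Kc))) := by
      rw [hrdef, Real.rpow_def_of_pos (by norm_num)]
    rw [hkpow, hrexp, ← Real.exp_add, Real.exp_le_exp]
    have hδ2 : β^2 / P2 ≤ δ^2 := by
      rw [hP2def, ← div_pow]
      apply pow_le_pow_left₀ (by positivity) hδβ
    have hmain1 : 3/16 * (Real.log 2 * n * (Kc⁻¹ / P2)) ≤ μ * δ^2 / 4 := by
      have hμδ : (3/4 * Real.log 2 * n) * (β^2/P2) ≤ μ * δ^2 :=
        mul_le_mul hμ32 hδ2 (by positivity) hμ0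
      have h1 : Kc⁻¹/P2 ≤ β^2/P2 := by gcongr
      calc 3/16 * (Real.log 2 * n * (Kc⁻¹ / P2))
          = 1/4 * ((3/4 * Real.log 2 * n) * (Kc⁻¹/P2)) := by ring
        _ ≤ 1/4 * ((3/4 * Real.log 2 * n) * (β^2/P2)) := by
            have hc0' : (0:ℝ) ≤ 3/4 * Real.log 2 * n := by positivity
            have := mul_le_mul_of_nonneg_left h1 hc0'
            linarith only [this]
        _ ≤ 1/4 * (μ * δ^2) := by linarith only [hμδ]
        _ = μ * δ^2 / 4 := by ring
    have hmain2 : (t:ℝ) * Real.log k ≤ 1/16 * (Real.log 2 * n * (Kc⁻¹ / P2)) := by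
      have e1 : (t:ℝ) * Real.log k = c * n * (Real.log k)^2 / (Real.log 2 * (k:ℝ)) := by
        rw [htα, hα, hlogb]
        field_simp
      have e2 : 1/16 * (Real.log 2 * n * (Kc⁻¹ / P2)) = Real.log 2 * n / (16 * P2 * Kc) := by
        field_simp
      rw [e1, e2, div_le_div_iff₀ (by positivity) (by positivity)]
      have hdag := hk₀ k hk
      rw [← hKcdef] at hdag
      have h7 := mul_le_mul_of_nonneg_left hdag hnR.le
      ring_nf at h7 ⊢
      linarith only [h7]
    have hmain3 : Real.log 2 * (-(n:ℝ) / (8 * P2 * Kc))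
        = -(1/8 * (Real.log 2 * n * (Kc⁻¹ / P2))) := by
      field_simp
    rw [hmain3]
    linarith only [hmain1, hmain2]
  have hkey : (cs : ℝ) * Real.exp (-(μ * δ ^ 2 / 4)) ≤ 2 * r * B := by
    have hC2n : (n.choose t : ℝ) ≤ (2:ℝ)^n := by
      exact_mod_cast aux_choose_le_two_pow n t
    have h2npos : (0:ℝ) < (2:ℝ)^n := by positivity
    have hcsle : (cs:ℝ) ≤ 2 * (n:ℝ)^2 * 2^n / (n.choose t : ℝ) := by
      have hx1 : (1:ℝ) ≤ (n:ℝ)^2 * 2^n / (n.choose t : ℝ) := by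
        rw [le_div_iff₀ hCpos, one_mul]
        have hn2 : (1:ℝ) ≤ (n:ℝ)^2 := one_le_pow₀ hn1
        calc (n.choose t : ℝ) ≤ (2:ℝ)^n := hC2n
          _ = 1 * (2:ℝ)^n := by ring
          _ ≤ (n:ℝ)^2 * 2^n := mul_le_mul_of_nonneg_right hn2 h2npos.le
      have hceil : (cs:ℝ) < (n:ℝ)^2 * 2^n / (n.choose t : ℝ) + 1 :=
        Nat.ceil_lt_add_one (by positivity)
      calc (cs:ℝ) ≤ (n:ℝ)^2 * 2^n / (n.choose t : ℝ) + 1 := hceil.le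
        _ ≤ 2 * ((n:ℝ)^2 * 2^n / (n.choose t : ℝ)) := by linarith only [hceil, hx1]
        _ = 2 * (n:ℝ)^2 * 2^n / (n.choose t : ℝ) := by ring
    have hEnn : (0:ℝ) ≤ Real.exp (-(μ * δ ^ 2 / 4)) := (Real.exp_pos _).le
    have h5 : Real.exp (-(μ * δ ^ 2 / 4)) * (k:ℝ)^t ≤ 4 * n * r := by
      calc Real.exp (-(μ * δ ^ 2 / 4)) * (k:ℝ)^t ≤ r := hEk
        _ = 1 * r := by ring
        _ ≤ (4 * n) * r := mul_le_mul_of_nonneg_right (by linarith only [hn1]) hr0.le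
    calc (cs : ℝ) * Real.exp (-(μ * δ ^ 2 / 4))
        ≤ (2 * (n:ℝ)^2 * 2^n / (n.choose t : ℝ)) * Real.exp (-(μ * δ ^ 2 / 4)) :=
          mul_le_mul_of_nonneg_right hcsle hEnn
      _ ≤ 2 * r * B := by
          rw [hBdef]
          have eL : (2 * (n:ℝ)^2 * 2^n / (n.choose t : ℝ)) * Real.exp (-(μ * δ ^ 2 / 4))
              = (2 * (n:ℝ)^2 * 2^n * Real.exp (-(μ * δ ^ 2 / 4))) / (n.choose t : ℝ) := by
            ring
          have eR : 2 * r * (4 * (n:ℝ)^3 * 2^n / ((n.choose t : ℝ) * (k:ℝ)^t))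
              = (8 * r * (n:ℝ)^3 * 2^n) / ((n.choose t : ℝ) * (k:ℝ)^t) := by
            ring
          rw [eL, eR, div_le_div_iff₀ hCpos (by positivity)]
          have h6 := mul_le_mul_of_nonneg_left h5
            (show (0:ℝ) ≤ 2 * (n:ℝ)^2 * 2^n * (n.choose t : ℝ) by positivity)
          ring_nf at h6 ⊢
          linarith only [h6]
  -- conclude
  beta_reduce at hmarkov
  have hpowcs : ((2:ℝ)^n)^cs = (2:ℝ)^n * ((2:ℝ)^n)^(cs-1) := by
    conv_lhs => rw [show cs = (cs-1)+1 by omega]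
    rw [pow_succ']
  have hRHS : (cs:ℝ) * ((2:ℝ)^n * K) * ((2:ℝ)^n)^(cs-1)
      = ((cs:ℝ) * Real.exp (-(μ * δ ^ 2 / 4))) * (((2*(n:ℝ))^k)^m * ((2:ℝ)^n)^cs) := by
    rw [hKdef, hpowcs]
    ring
  set Bad := (univ : Finset (Formula n k m × (Fin cs → Assignment n))).filter fun p =>
      ¬ ((((univ : Finset (Fin cs)).filter fun i =>
          (numUnsat p.1 (p.2 i) : ℝ) ≤ (1 - δ) * μ).card : ℝ) ≤ B) with hBaddef
  have hBadB : B * (Bad.card : ℝ)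
      ≤ ((cs:ℝ) * Real.exp (-(μ * δ ^ 2 / 4))) * (((2*(n:ℝ))^k)^m * ((2:ℝ)^n)^cs) := by
    rw [← hRHS]
    exact hmarkov
  have hBad2r : (Bad.card : ℝ)
      ≤ 2 * r * (Fintype.card (Formula n k m × (Fin cs → Assignment n)) : ℝ) := by
    have h1 : B * (Bad.card : ℝ)
        ≤ B * (2 * r * (Fintype.card (Formula n k m × (Fin cs → Assignment n)) : ℝ)) := by
      calc B * (Bad.card : ℝ)
          ≤ ((cs:ℝ) * Real.exp (-(μ * δ ^ 2 / 4))) * (((2*(n:ℝ))^k)^m * ((2:ℝ)^n)^cs) :=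
            hBadB
        _ ≤ (2 * r * B) * (((2*(n:ℝ))^k)^m * ((2:ℝ)^n)^cs) :=
            mul_le_mul_of_nonneg_right hkey (by positivity)
        _ = B * (2 * r * (((2*(n:ℝ))^k)^m * ((2:ℝ)^n)^cs)) := by ring
        _ = B * (2 * r * (Fintype.card (Formula n k m × (Fin cs → Assignment n)) : ℝ)) := by
            rw [hNtot]
    exact le_of_mul_le_mul_left h1 hBpos
  have hsplit : ((univ : Finset (Formula n k m × (Fin cs → Assignment n))).filter fun p =>
        ((((univ : Finset (Fin cs)).filter fun i =>
            (numUnsat p.1 (p.2 i) : ℝ) ≤ (1 - δ) * μ).card : ℝ) ≤ B)).card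
      + Bad.card = Fintype.card (Formula n k m × (Fin cs → Assignment n)) := by
    rw [hBaddef, Finset.card_filter_add_card_filter_not, Finset.card_univ]
  rw [hgoalpred, ge_iff_le, le_div_iff₀ hNtotpos]
  have hsplitR : (((univ : Finset (Formula n k m × (Fin cs → Assignment n))).filter fun p =>
        ((((univ : Finset (Fin cs)).filter fun i =>
            (numUnsat p.1 (p.2 i) : ℝ) ≤ (1 - δ) * μ).card : ℝ) ≤ B)).card : ℝ)
      + (Bad.card : ℝ)
      = (Fintype.card (Formula n k m × (Fin cs → Assignment n)) : ℝ) := by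
    exact_mod_cast hsplit
  linarith only [hsplitR, hBad2r, hr0]
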